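/- Let (X,d) be a compact metric space, (Z,d_Z) a σ-compact locally compact metric space (having a countable basis of relatively compact open sets), and f_M : X^M × Z → ℝ a sequence of functions that are symmetric in x, uniformly bounded as |f_M(x,z)| ≤ B_f + b(z), and uniformly Lipschitz: |f_M(x₁,z₁) − f_M(x₂,z₂)| ≤ L_f(d_KR(μ̂[x₁],μ̂[x₂]) + d_Z(z₁,z₂)). Then there exists a subsequence (f_{M_ℓ}) and a continuous L_f-Lipschitz function f : P(X) × Z → ℝ such that for every compact K ⊆ Z, sup_{x ∈ X^{M_ℓ}, z ∈ K} |f_{M_ℓ}(x,z) − f(μ̂[x],z)| → 0 as ℓ → ∞; moreover there exists B_F ≥ 0 with |f(μ,z)| ≤ B_F + b(z) for all μ, z. -/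

import Mathlib

set_option linter.unusedSectionVars false
set_option linter.deprecated false

open MeasureTheory Filter
open scoped ENNReal

/-- Kantorovich–Rubinstein metric: `d_KR(μ,ν) = sup{∫φ dμ − ∫φ dν : φ 1-Lipschitz}`. -/
noncomputable def dKR {X : Type*} [MeasurableSpace X] [MetricSpace X] (μ ν : Measure X) : ℝ :=
  ⨆ φ : {f : X → ℝ // LipschitzWith 1 f}, (∫ x, φ.1 x ∂μ - ∫ x, φ.1 x ∂ν)

/-- The empirical measure `(1/M) ∑ᵢ δ_{xᵢ}` of a tuple `x ∈ X^M`. -/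
noncomputable def empMeasure {X : Type*} [MeasurableSpace X] {M : ℕ} (x : Fin M → X) : Measure X :=
  ((M : ℝ≥0∞)⁻¹) • ∑ i, Measure.dirac (x i)

theorem empMeasure_prob {X : Type*} [MeasurableSpace X] {M : ℕ} (x : Fin (M + 1) → X) :
    IsProbabilityMeasure (empMeasure x) := by
  constructor
  simp only [empMeasure, Measure.smul_apply, smul_eq_mul]
  rw [Measure.coe_finset_sum]
  simp only [Finset.sum_apply, measure_univ, Finset.sum_const, Finset.card_univ,
    Fintype.card_fin, nsmul_eq_mul, mul_one]
  exact ENNReal.inv_mul_cancel (by exact_mod_cast Nat.succ_ne_zero M) (by simp)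

/-- The empirical measure of a (nonempty) tuple, as a probability measure. -/
noncomputable def empProb {X : Type*} [MeasurableSpace X] {M : ℕ} (x : Fin (M + 1) → X) :
    ProbabilityMeasure X :=
  ⟨empMeasure x, empMeasure_prob x⟩

section Aux

variable {X : Type*} [MetricSpace X] [CompactSpace X] [Nonempty X]
  [MeasurableSpace X] [BorelSpace X]

/-- diameter bound -/
noncomputable def dXd (X : Type*) [MetricSpace X] : ℝ := Metric.diam (Set.univ : Set X)

lemma dXd_nonneg : 0 ≤ dXd X := Metric.diam_nonneg

lemma dist_le_dXd (a b : X) : dist a b ≤ dXd X :=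
  Metric.dist_le_diam_of_mem isCompact_univ.isBounded (Set.mem_univ a) (Set.mem_univ b)

instance : Nonempty {f : X → ℝ // LipschitzWith 1 f} :=
  ⟨⟨fun _ => 0, (LipschitzWith.const 0).weaken zero_le_one⟩⟩

lemma lip_integrable (φ : X → ℝ) (hφ : Continuous φ) (μ : Measure X) [IsFiniteMeasure μ] :
    Integrable φ μ :=
  hφ.integrable_of_hasCompactSupport (isClosed_tsupport φ).isCompact

lemma integral_empMeasure {M : ℕ} (x : Fin (M + 1) → X) (φ : X → ℝ) (hφ : Continuous φ) :
    ∫ a, φ a ∂(empMeasure x) = (∑ i, φ (x i)) / (M + 1) := by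
  rw [empMeasure, integral_smul_measure,
    integral_finset_sum_measure (fun i _ => lip_integrable φ hφ _)]
  simp only [integral_dirac]
  rw [smul_eq_mul]
  rw [show ((((M:ℕ)+1 : ℕ) : ℝ≥0∞)⁻¹).toReal = ((M:ℝ)+1)⁻¹ by
    rw [ENNReal.toReal_inv]
    rw [ENNReal.toReal_natCast]
    push_cast
    ring]
  ring

lemma dkr_le {μ ν : Measure X} {r : ℝ}
    (h : ∀ φ : X → ℝ, LipschitzWith 1 φ → ∫ a, φ a ∂μ - ∫ a, φ a ∂ν ≤ r) :
    dKR μ ν ≤ r :=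
  ciSup_le fun φ => h φ.1 φ.2

/-- normalization trick -/
lemma norm_trick (φ : X → ℝ) (hφ : LipschitzWith 1 φ) (μ ν : Measure X)
    [IsProbabilityMeasure μ] [IsProbabilityMeasure ν] :
    ∃ ψ : X → ℝ, LipschitzWith 1 ψ ∧ (∀ a, |ψ a| ≤ dXd X) ∧
      ∫ a, φ a ∂μ - ∫ a, φ a ∂ν = ∫ a, ψ a ∂μ - ∫ a, ψ a ∂ν := by
  obtain ⟨x₀⟩ := ‹Nonempty X›
  refine ⟨fun a => φ a - φ x₀, ?_, ?_, ?_⟩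
  · have h0 : LipschitzWith 0 (fun _ : X => φ x₀) := LipschitzWith.const _
    have := hφ.sub h0
    simpa using this
  · intro a
    calc |φ a - φ x₀| = dist (φ a) (φ x₀) := (Real.dist_eq _ _).symm
    _ ≤ 1 * dist a x₀ := hφ.dist_le_mul a x₀
    _ ≤ dXd X := by rw [one_mul]; exact dist_le_dXd a x₀
  · have hμ : ∫ a, (φ a - φ x₀) ∂μ = ∫ a, φ a ∂μ - φ x₀ := by
      rw [integral_sub (lip_integrable φ hφ.continuous μ) (integrable_const _)]
      simp
    have hν : ∫ a, (φ a - φ x₀) ∂ν = ∫ a, φ a ∂ν - φ x₀ := by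
      rw [integral_sub (lip_integrable φ hφ.continuous ν) (integrable_const _)]
      simp
    rw [hμ, hν]; ring

lemma dkr_le' {μ ν : Measure X} [IsProbabilityMeasure μ] [IsProbabilityMeasure ν] {r : ℝ}
    (h : ∀ ψ : X → ℝ, LipschitzWith 1 ψ → (∀ a, |ψ a| ≤ dXd X) →
      ∫ a, ψ a ∂μ - ∫ a, ψ a ∂ν ≤ r) :
    dKR μ ν ≤ r := by
  apply dkr_le
  intro φ hφ
  obtain ⟨ψ, h1, h2, h3⟩ := norm_trick φ hφ μ ν
  rw [h3]; exact h ψ h1 h2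

lemma dkr_bddAbove (μ ν : Measure X) [IsProbabilityMeasure μ] [IsProbabilityMeasure ν] :
    BddAbove (Set.range fun φ : {f : X → ℝ // LipschitzWith 1 f} =>
      (∫ a, φ.1 a ∂μ - ∫ a, φ.1 a ∂ν)) := by
  refine ⟨2 * dXd X, ?_⟩
  rintro - ⟨φ, rfl⟩
  show ∫ a, φ.1 a ∂μ - ∫ a, φ.1 a ∂ν ≤ 2 * dXd X
  obtain ⟨ψ, h1, h2, h3⟩ := norm_trick φ.1 φ.2 μ ν
  rw [h3]
  have hint : Integrable ψ μ := lip_integrable ψ h1.continuous μ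
  have hint' : Integrable ψ ν := lip_integrable ψ h1.continuous ν
  have b1 : ∫ a, ψ a ∂μ ≤ dXd X := by
    calc ∫ a, ψ a ∂μ ≤ ∫ _, dXd X ∂μ :=
      integral_mono hint (integrable_const _) (fun a => (abs_le.mp (h2 a)).2)
    _ = dXd X := by simp
  have b2 : -(dXd X) ≤ ∫ a, ψ a ∂ν := by
    have := integral_mono (μ := ν) (integrable_const (-(dXd X))) hint'
      (fun a => (abs_le.mp (h2 a)).1)
    simpa using this
  linarith

lemma le_dkr {μ ν : Measure X} [IsProbabilityMeasure μ] [IsProbabilityMeasure ν]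
    (φ : X → ℝ) (hφ : LipschitzWith 1 φ) :
    ∫ a, φ a ∂μ - ∫ a, φ a ∂ν ≤ dKR μ ν :=
  le_ciSup (dkr_bddAbove μ ν) ⟨φ, hφ⟩

lemma dkr_nonneg (μ ν : Measure X) [IsProbabilityMeasure μ] [IsProbabilityMeasure ν] :
    0 ≤ dKR μ ν := by
  have := le_dkr (μ := μ) (ν := ν) (fun _ => 0) ((LipschitzWith.const 0).weaken zero_le_one)
  simpa using this

lemma dkr_le_two_dXd (μ ν : Measure X) [IsProbabilityMeasure μ] [IsProbabilityMeasure ν] :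
    dKR μ ν ≤ 2 * dXd X := by
  apply dkr_le'
  intro ψ h1 h2
  have hint : Integrable ψ μ := lip_integrable ψ h1.continuous μ
  have hint' : Integrable ψ ν := lip_integrable ψ h1.continuous ν
  have b1 : ∫ a, ψ a ∂μ ≤ dXd X := by
    calc ∫ a, ψ a ∂μ ≤ ∫ _, dXd X ∂μ :=
      integral_mono hint (integrable_const _) (fun a => (abs_le.mp (h2 a)).2)
    _ = dXd X := by simp
  have b2 : -(dXd X) ≤ ∫ a, ψ a ∂ν := by
    have := integral_mono (μ := ν) (integrable_const (-(dXd X))) hint'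
      (fun a => (abs_le.mp (h2 a)).1)
    simpa using this
  linarith

lemma dkr_self (μ : Measure X) : dKR μ μ = 0 := by
  have : (fun φ : {f : X → ℝ // LipschitzWith 1 f} => (∫ a, φ.1 a ∂μ - ∫ a, φ.1 a ∂μ))
      = fun _ => (0:ℝ) := by
    funext φ; exact sub_self _
  rw [dKR, this, ciSup_const]

lemma dkr_symm (μ ν : Measure X) [IsProbabilityMeasure μ] [IsProbabilityMeasure ν] :
    dKR μ ν = dKR ν μ := by
  have key : ∀ (ρ τ : Measure X), ∀ (_ : IsProbabilityMeasure ρ) (_ : IsProbabilityMeasure τ),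
      dKR ρ τ ≤ dKR τ ρ := by
    intro ρ τ hρ hτ
    apply dkr_le
    intro φ hφ
    have hneg : LipschitzWith 1 (fun a => -φ a) := by
      have := hφ.neg (E := ℝ); simpa [Pi.neg_def] using this
    have := le_dkr (μ := τ) (ν := ρ) (fun a => -φ a) hneg
    rw [integral_neg, integral_neg] at this
    linarith
  exact le_antisymm (key μ ν ‹_› ‹_›) (key ν μ ‹_› ‹_›)

lemma dkr_triangle (μ ν ρ : Measure X) [IsProbabilityMeasure μ] [IsProbabilityMeasure ν]
    [IsProbabilityMeasure ρ] : dKR μ ρ ≤ dKR μ ν + dKR ν ρ := by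
  apply dkr_le
  intro φ hφ
  have h1 := le_dkr (μ := μ) (ν := ν) φ hφ
  have h2 := le_dkr (μ := ν) (ν := ρ) φ hφ
  linarith

end Aux

section Aux2

variable {X : Type*} [MetricSpace X] [CompactSpace X] [Nonempty X]
  [MeasurableSpace X] [BorelSpace X]

lemma dkr_emp_le {M N : ℕ} (x : Fin (M + 1) → X) (y : Fin (N + 1) → X) {r : ℝ}
    (h : ∀ ψ : X → ℝ, LipschitzWith 1 ψ → (∀ a, |ψ a| ≤ dXd X) →
      (∑ i, ψ (x i)) / (M + 1) - (∑ j, ψ (y j)) / (N + 1) ≤ r) :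
    dKR (empMeasure x) (empMeasure y) ≤ r := by
  haveI := empMeasure_prob x
  haveI := empMeasure_prob y
  apply dkr_le'
  intro ψ h1 h2
  rw [integral_empMeasure x ψ h1.continuous, integral_empMeasure y ψ h1.continuous]
  exact h ψ h1 h2

lemma dkr_emp_pointwise {M : ℕ} (x y : Fin (M + 1) → X) {δ : ℝ}
    (h : ∀ i, dist (x i) (y i) ≤ δ) :
    dKR (empMeasure x) (empMeasure y) ≤ δ := by
  apply dkr_emp_le
  intro ψ h1 _
  rw [div_sub_div_same, div_le_iff₀ (by positivity)]
  rw [← Finset.sum_sub_distrib]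
  calc ∑ i, (ψ (x i) - ψ (y i)) ≤ ∑ _i : Fin (M+1), δ := by
        apply Finset.sum_le_sum
        intro i _
        calc ψ (x i) - ψ (y i) ≤ |ψ (x i) - ψ (y i)| := le_abs_self _
        _ = dist (ψ (x i)) (ψ (y i)) := (Real.dist_eq _ _).symm
        _ ≤ 1 * dist (x i) (y i) := h1.dist_le_mul _ _
        _ ≤ δ := by rw [one_mul]; exact h i
  _ = δ * (M + 1) := by simp [Finset.sum_const, nsmul_eq_mul, mul_comm]

/-- the repeated tuple -/
def repTuple {X : Type*} {n : ℕ} (t : Fin (n + 1) → X) (M : ℕ) : Fin (M + 1) → X :=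
  fun i => t ⟨i.val % (n + 1), Nat.mod_lt _ n.succ_pos⟩

lemma sum_period (g : ℕ → ℝ) (k : ℕ) (hg : ∀ a, g (a % (k+1)) = g a) (q : ℕ) :
    ∑ i ∈ Finset.range (q * (k + 1)), g i = q * ∑ j ∈ Finset.range (k + 1), g j := by
  induction q with
  | zero => simp
  | succ q ih =>
    have hsplit : ∑ i ∈ Finset.range (q * (k+1)), g i
        + ∑ i ∈ Finset.Ico (q * (k+1)) ((q+1) * (k+1)), g i
        = ∑ i ∈ Finset.range ((q+1) * (k+1)), g i := by
      rw [Finset.range_eq_Ico, Finset.range_eq_Ico]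
      exact Finset.sum_Ico_consecutive g (Nat.zero_le _)
        (Nat.mul_le_mul_right _ (Nat.le_succ q))
    have htail : ∑ i ∈ Finset.Ico (q * (k+1)) ((q+1) * (k+1)), g i
        = ∑ j ∈ Finset.range (k+1), g j := by
      rw [Finset.sum_Ico_eq_sum_range]
      have hlen : (q+1) * (k+1) - q * (k+1) = k+1 := by
        rw [Nat.succ_mul, Nat.add_sub_cancel_left]
      rw [hlen]
      apply Finset.sum_congr rfl
      intro j hj
      have hj' : j < k + 1 := Finset.mem_range.mp hj
      have hmod : (q * (k+1) + j) % (k+1) = j := by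
        rw [Nat.add_comm, Nat.mul_comm, Nat.add_mul_mod_self_left, Nat.mod_eq_of_lt hj']
      calc g (q * (k+1) + j) = g ((q * (k+1) + j) % (k+1)) := (hg _).symm
      _ = g j := by rw [hmod]
    rw [← hsplit, ih, htail]
    push_cast
    ring

lemma rep_sum_est {n : ℕ} (t : Fin (n + 1) → X) (M : ℕ) (ψ : X → ℝ)
    (h2 : ∀ a, |ψ a| ≤ dXd X) :
    |(∑ i, ψ (repTuple t M i)) / (M + 1) - (∑ r, ψ (t r)) / (n + 1)|
      ≤ 2 * (n + 1) * dXd X / (M + 1) := by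
  set g : ℕ → ℝ := fun i => ψ (t ⟨i % (n+1), Nat.mod_lt _ n.succ_pos⟩) with hgdef
  have hg : ∀ a, g (a % (n+1)) = g a := by
    intro a
    simp only [hgdef]
    congr 2
    exact Fin.ext (by simpa using Nat.mod_mod_of_dvd a dvd_rfl)
  set q := (M + 1) / (n+1) with hqdef
  set s := (M + 1) % (n+1) with hsdef
  have hqs : (n+1) * q + s = M + 1 := Nat.div_add_mod (M+1) (n+1)
  have hslt : s < n+1 := Nat.mod_lt _ n.succ_pos
  have hsum1 : ∑ i, ψ (repTuple t M i) = ∑ i ∈ Finset.range (M + 1), g i := by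
    rw [← Fin.sum_univ_eq_sum_range g (M+1)]
    rfl
  set A := ∑ j ∈ Finset.range (n+1), g j with hA
  have hAeq : ∑ r, ψ (t r) = A := by
    rw [hA, ← Fin.sum_univ_eq_sum_range g (n+1)]
    apply Finset.sum_congr rfl
    intro r _
    simp only [hgdef]
    congr 2
    exact (Fin.ext (by simp [Nat.mod_eq_of_lt r.isLt])).symm
  set R := ∑ i ∈ Finset.Ico (q * (n+1)) (M + 1), g i with hR
  have hqle : q * (n+1) ≤ M + 1 := by
    rw [Nat.mul_comm]
    exact hqs ▸ Nat.le_add_right _ _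
  have hsplit : ∑ i ∈ Finset.range (M + 1), g i = q * A + R := by
    have h1 := Finset.sum_Ico_consecutive g (Nat.zero_le (q*(n+1))) hqle
    rw [← Finset.range_eq_Ico, ← Finset.range_eq_Ico] at h1
    rw [← h1, sum_period g n hg q, hA, hR]
  have habsA : |A| ≤ (n+1) * dXd X := by
    calc |A| ≤ ∑ j ∈ Finset.range (n+1), |g j| := Finset.abs_sum_le_sum_abs _ _
    _ ≤ ∑ _j ∈ Finset.range (n+1), dXd X := Finset.sum_le_sum (fun j _ => h2 _)
    _ = (n+1) * dXd X := by simp [Finset.sum_const, nsmul_eq_mul]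
  have habsR : |R| ≤ s * dXd X := by
    calc |R| ≤ ∑ i ∈ Finset.Ico (q * (n+1)) (M + 1), |g i| := Finset.abs_sum_le_sum_abs _ _
    _ ≤ ∑ _i ∈ Finset.Ico (q * (n+1)) (M + 1), dXd X := Finset.sum_le_sum (fun i _ => h2 _)
    _ = s * dXd X := by
        rw [Finset.sum_const, Nat.card_Ico, nsmul_eq_mul]
        congr 1
        have hc : q * (n+1) = (n+1) * q := Nat.mul_comm _ _
        have hnat : M + 1 - q * (n + 1) = s := by omega
        rw [hnat]
  have hm1 : (0:ℝ) < (M:ℝ) + 1 := by positivity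
  have hk1r : (0:ℝ) < (n:ℝ) + 1 := by positivity
  have hcast : (M:ℝ) + 1 = ((n:ℝ)+1) * q + s := by exact_mod_cast hqs.symm
  rw [hsum1, hsplit, hAeq]
  have key : ((q:ℝ) * A + R) / ((M:ℝ) + 1) - A / ((n:ℝ)+1)
      = (((n:ℝ)+1) * R - s * A) / (((M:ℝ) + 1) * ((n:ℝ)+1)) := by
    field_simp
    rw [hcast]
    ring
  rw [key, abs_div,
    abs_of_pos (show (0:ℝ) < ((M:ℝ)+1) * ((n:ℝ)+1) by positivity)]
  rw [div_le_div_iff₀ (by positivity) hm1]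
  have hsk : (s:ℝ) ≤ (n:ℝ) + 1 := by exact_mod_cast hslt.le
  have hnum : |((n:ℝ)+1) * R - s * A| ≤ 2 * ((n:ℝ)+1) * (((n:ℝ)+1) * dXd X) := by
    rw [sub_eq_add_neg]
    calc |((n:ℝ)+1) * R + -((s:ℝ) * A)| ≤ |((n:ℝ)+1) * R| + |-((s:ℝ) * A)| := abs_add_le _ _
    _ = ((n:ℝ)+1) * |R| + (s:ℝ) * |A| := by
        rw [abs_neg, abs_mul, abs_mul, abs_of_pos hk1r, abs_of_nonneg (by positivity : (0:ℝ) ≤ (s:ℝ))]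
    _ ≤ ((n:ℝ)+1) * ((s:ℝ) * dXd X) + (s:ℝ) * (((n:ℝ)+1) * dXd X) := by
        apply add_le_add
        · exact mul_le_mul_of_nonneg_left habsR (by positivity)
        · exact mul_le_mul_of_nonneg_left habsA (by positivity)
    _ = 2 * (s:ℝ) * (((n:ℝ)+1) * dXd X) := by ring
    _ ≤ 2 * ((n:ℝ)+1) * (((n:ℝ)+1) * dXd X) := by
        apply mul_le_mul_of_nonneg_right _ (mul_nonneg hk1r.le (dXd_nonneg (X := X)))
        linarith
  calc |((n:ℝ)+1) * R - (s:ℝ) * A| * ((M:ℝ)+1)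
      ≤ (2 * ((n:ℝ)+1) * (((n:ℝ)+1) * dXd X)) * ((M:ℝ)+1) :=
        mul_le_mul_of_nonneg_right hnum hm1.le
  _ = 2 * ((n:ℝ) + 1) * dXd X * (((M:ℝ) + 1) * ((n:ℝ)+1)) := by ring

lemma dkr_rep {n : ℕ} (t : Fin (n + 1) → X) (M : ℕ) :
    dKR (empMeasure (repTuple t M)) (empMeasure t) ≤ 2 * (n + 1) * dXd X / (M + 1) ∧
    dKR (empMeasure t) (empMeasure (repTuple t M)) ≤ 2 * (n + 1) * dXd X / (M + 1) := by
  constructor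
  · apply dkr_emp_le
    intro ψ h1 h2
    exact le_trans (le_abs_self _) (rep_sum_est t M ψ h2)
  · apply dkr_emp_le
    intro ψ h1 h2
    rw [← neg_sub]
    calc -((∑ i, ψ (repTuple t M i)) / (M + 1) - (∑ r, ψ (t r)) / (n + 1))
        ≤ |(∑ i, ψ (repTuple t M i)) / (M + 1) - (∑ r, ψ (t r)) / (n + 1)| := neg_le_abs _
    _ ≤ 2 * (n + 1) * dXd X / (M + 1) := rep_sum_est t M ψ h2

end Aux2

section Aux3

variable {X : Type*} [MetricSpace X] [CompactSpace X] [Nonempty X]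
  [MeasurableSpace X] [BorelSpace X]

lemma exists_net (ε : ℝ) (hε : 0 < ε) :
    ∃ (p : ℕ) (w : Fin (p + 1) → X), ∀ a : X, ∃ r, dist a (w r) < ε := by
  have hcov : (Set.univ : Set X) ⊆ ⋃ c : X, Metric.ball c ε := by
    intro a _
    exact Set.mem_iUnion.mpr ⟨a, Metric.mem_ball_self hε⟩
  obtain ⟨T, hT⟩ := isCompact_univ.elim_finite_subcover (fun c : X => Metric.ball c ε)
    (fun c => Metric.isOpen_ball) hcov
  have hTne : T.Nonempty := by
    by_contra hne
    rw [Finset.not_nonempty_iff_eq_empty] at hne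
    obtain ⟨a⟩ := ‹Nonempty X›
    have := hT (Set.mem_univ a)
    simp [hne] at this
  obtain ⟨p, hp⟩ : ∃ p, T.toList.length = p + 1 := by
    have : T.toList.length ≠ 0 := by
      rw [Finset.length_toList]
      exact Finset.card_ne_zero_of_mem hTne.choose_spec
    exact Nat.exists_eq_succ_of_ne_zero this
  refine ⟨p, fun r => T.toList.get (Fin.cast hp.symm r), ?_⟩
  intro a
  have := hT (Set.mem_univ a)
  simp only [Set.mem_iUnion] at this
  obtain ⟨c, hcT, hc⟩ := this
  have hcl : c ∈ T.toList := Finset.mem_toList.mpr hcT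
  obtain ⟨i, hi⟩ := List.get_of_mem hcl
  refine ⟨Fin.cast hp i, ?_⟩
  show dist a (T.toList.get i) < ε
  rw [hi]
  exact Metric.mem_ball.mp hc

lemma nat_sum_div_le {ι : Type*} (s : Finset ι) (f : ι → ℕ) (d : ℕ) (hd : 0 < d) :
    ∑ i ∈ s, f i / d ≤ (∑ i ∈ s, f i) / d := by
  classical
  induction s using Finset.induction with
  | empty => simp
  | @insert y s hx ih =>
    rw [Finset.sum_insert hx, Finset.sum_insert hx]
    have h1 : f y / d + ∑ i ∈ s, f i / d ≤ f y / d + (∑ i ∈ s, f i) / d :=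
      Nat.add_le_add_left ih _
    have h2 : f y / d + (∑ i ∈ s, f i) / d ≤ (f y + ∑ i ∈ s, f i) / d := by
      rw [Nat.le_div_iff_mul_le hd, Nat.add_mul]
      exact Nat.add_le_add (Nat.div_mul_le_self _ _) (Nat.div_mul_le_self _ _)
    omega

/-- Quantization: every empirical measure is `ε`-close to the empirical measure of a tuple of
fixed length `k+1` with entries among the `w r`. -/
lemma quantize (ε : ℝ) (hε : 0 < ε) {p : ℕ} (w : Fin (p + 1) → X)
    (hw : ∀ a : X, ∃ r, dist a (w r) < ε) (k : ℕ)
    (hk : 2 * ((p:ℝ) + 1) * dXd X / ((k:ℝ) + 1) ≤ ε) :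
    ∀ (M : ℕ) (x : Fin (M + 1) → X), ∃ c : Fin (k + 1) → Fin (p + 1),
      dKR (empMeasure x) (empMeasure (w ∘ c)) ≤ 2 * ε ∧
      dKR (empMeasure (w ∘ c)) (empMeasure x) ≤ 2 * ε := by
  intro M x
  -- nearest-point coding of x
  choose c' hc' using fun i => hw (x i)
  -- counts
  classical
  set cnt : Fin (p + 1) → ℕ := fun r => (Finset.univ.filter (fun i => c' i = r)).card with hcnt
  have hcntsum : ∑ r, cnt r = M + 1 := by
    rw [hcnt]
    rw [← Finset.card_eq_sum_card_fiberwise (fun i _ => Finset.mem_univ (c' i))]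
    simp
  -- rounded counts
  set flr : Fin (p + 1) → ℕ := fun r => cnt r * (k + 1) / (M + 1) with hflr
  have hflrle : ∑ r ∈ Finset.univ.erase 0, flr r ≤ k + 1 := by
    calc ∑ r ∈ Finset.univ.erase 0, flr r ≤ ∑ r, flr r :=
      Finset.sum_le_sum_of_subset (Finset.erase_subset _ _)
    _ ≤ (∑ r, cnt r * (k+1)) / (M + 1) := nat_sum_div_le _ _ _ (Nat.succ_pos M)
    _ = k + 1 := by
      rw [← Finset.sum_mul, hcntsum]
      rw [Nat.mul_comm, Nat.mul_div_cancel _ (Nat.succ_pos M)]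
  set a : Fin (p + 1) → ℕ := fun r =>
    if r = 0 then (k + 1) - ∑ r' ∈ Finset.univ.erase 0, flr r' else flr r with ha
  have hasum : ∑ r, a r = k + 1 := by
    rw [← Finset.add_sum_erase _ a (Finset.mem_univ 0)]
    have h1 : a 0 = (k + 1) - ∑ r' ∈ Finset.univ.erase 0, flr r' := by simp [ha]
    have h2 : ∑ r ∈ Finset.univ.erase 0, a r = ∑ r ∈ Finset.univ.erase 0, flr r := by
      apply Finset.sum_congr rfl
      intro r hr
      simp only [ha]
      rw [if_neg (Finset.ne_of_mem_erase hr)]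
    rw [h1, h2]
    omega
  -- the tuple of length k+1
  set L : List (Fin (p + 1)) :=
    (List.finRange (p + 1)).flatMap (fun r => List.replicate (a r) r) with hL
  have hLlen : L.length = k + 1 := by
    rw [hL, List.length_flatMap]
    rw [← List.ofFn_eq_map, List.sum_ofFn]
    simpa using hasum
  set c : Fin (k + 1) → Fin (p + 1) := fun i => L.get (Fin.cast hLlen.symm i) with hc
  refine ⟨c, ?_⟩
  -- sum computations
  have hsum_u : ∀ ψ : X → ℝ, ∑ i, ψ (w (c i)) = ∑ r, (a r : ℝ) * ψ (w r) := by
    intro ψ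
    have h1 : ∑ i, ψ (w (c i)) = ∑ j : Fin L.length, ψ (w (L.get j)) := by
      apply Finset.sum_nbij (fun i => Fin.cast hLlen.symm i)
      · intro i _; exact Finset.mem_univ _
      · intro i _ j _ h
        exact Fin.ext (by simpa using congrArg Fin.val h)
      · intro j _
        exact ⟨Fin.cast hLlen j, Finset.mem_coe.mpr (Finset.mem_univ _), rfl⟩
      · intro i _; rfl
    rw [h1]
    have h2 : ∑ j : Fin L.length, ψ (w (L.get j)) = ((L.map (fun r => ψ (w r))).sum) := by
      rw [← List.sum_ofFn]
      congr 1
      rw [show (fun j : Fin L.length => ψ (w (L.get j))) = ((fun r => ψ (w r)) ∘ L.get) from rfl]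
      rw [← List.map_ofFn, List.ofFn_get]
    rw [h2, hL]
    rw [List.map_flatMap]
    simp only [List.map_replicate]
    rw [List.flatMap_def, List.sum_flatten, List.map_map]
    rw [← List.ofFn_eq_map, List.sum_ofFn]
    apply Finset.sum_congr rfl
    intro r _
    simp only [Function.comp_apply, List.sum_replicate, nsmul_eq_mul]
  have hsum_x' : ∀ ψ : X → ℝ, ∑ i, ψ (w (c' i)) = ∑ r, (cnt r : ℝ) * ψ (w r) := by
    intro ψ
    rw [← Finset.sum_fiberwise_of_maps_to (fun i _ => Finset.mem_univ (c' i))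
      (fun i => ψ (w (c' i)))]
    apply Finset.sum_congr rfl
    intro r _
    calc ∑ i ∈ Finset.univ.filter (fun i => c' i = r), ψ (w (c' i))
        = ∑ i ∈ Finset.univ.filter (fun i => c' i = r), ψ (w r) := by
          apply Finset.sum_congr rfl
          intro i hi
          rw [(Finset.mem_filter.mp hi).2]
    _ = (cnt r : ℝ) * ψ (w r) := by
          rw [Finset.sum_const, nsmul_eq_mul, hcnt]
  -- weight error bounds
  have hm1 : (0:ℝ) < (M:ℝ) + 1 := by positivity
  have hk1 : (0:ℝ) < (k:ℝ) + 1 := by positivity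
  have herr : ∀ r : Fin (p+1), r ≠ 0 →
      |(a r : ℝ) / ((k:ℝ)+1) - (cnt r : ℝ) / ((M:ℝ)+1)| ≤ 1 / ((k:ℝ)+1) := by
    intro r hr
    have har : a r = cnt r * (k+1) / (M+1) := by simp [ha, if_neg hr, hflr]
    have hlow : (a r : ℝ) * ((M:ℝ)+1) ≤ (cnt r : ℝ) * ((k:ℝ)+1) := by
      have := Nat.div_mul_le_self (cnt r * (k+1)) (M+1)
      rw [← har] at this
      exact_mod_cast this
    have hhigh : (cnt r : ℝ) * ((k:ℝ)+1) < ((a r : ℝ) + 1) * ((M:ℝ)+1) := by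
      have h1 : cnt r * (k+1) / (M+1) < a r + 1 := by rw [har]; exact Nat.lt_succ_self _
      have := (Nat.div_lt_iff_lt_mul (Nat.succ_pos M)).mp h1
      exact_mod_cast this
    have d1 : (a r : ℝ)/((k:ℝ)+1) ≤ (cnt r : ℝ)/((M:ℝ)+1) := by
      rw [div_le_div_iff₀ hk1 hm1]
      linarith
    have d2 : (cnt r : ℝ)/((M:ℝ)+1) ≤ (a r : ℝ)/((k:ℝ)+1) + 1/((k:ℝ)+1) := by
      rw [← add_div, div_le_div_iff₀ hm1 hk1]
      linarith
    have h1k : (0:ℝ) < 1 / ((k:ℝ)+1) := by positivity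
    rw [abs_le]
    constructor
    · linarith
    · linarith
  have hsum_w_1 : ∑ r, (cnt r : ℝ) / ((M:ℝ)+1) = 1 := by
    rw [← Finset.sum_div]
    rw [show ∑ r, (cnt r : ℝ) = ((M:ℝ)+1) by exact_mod_cast congrArg Nat.cast hcntsum]
    exact div_self hm1.ne'
  have hsum_a_1 : ∑ r, (a r : ℝ) / ((k:ℝ)+1) = 1 := by
    rw [← Finset.sum_div]
    rw [show ∑ r, (a r : ℝ) = ((k:ℝ)+1) by exact_mod_cast congrArg Nat.cast hasum]
    exact div_self hk1.ne'
  have herr0 : |(a 0 : ℝ) / ((k:ℝ)+1) - (cnt 0 : ℝ) / ((M:ℝ)+1)| ≤ (p:ℝ) / ((k:ℝ)+1) := by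
    have h0 : (a 0 : ℝ) / ((k:ℝ)+1) - (cnt 0 : ℝ) / ((M:ℝ)+1)
        = ∑ r ∈ Finset.univ.erase 0, ((cnt r : ℝ) / ((M:ℝ)+1) - (a r : ℝ) / ((k:ℝ)+1)) := by
      rw [Finset.sum_sub_distrib]
      have e1 : (cnt 0 : ℝ) / ((M:ℝ)+1) + ∑ r ∈ Finset.univ.erase 0, (cnt r : ℝ) / ((M:ℝ)+1) = 1 :=
        (Finset.add_sum_erase _ (fun r => (cnt r : ℝ) / ((M:ℝ)+1)) (Finset.mem_univ 0)).trans
          hsum_w_1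
      have e2 : (a 0 : ℝ) / ((k:ℝ)+1) + ∑ r ∈ Finset.univ.erase 0, (a r : ℝ) / ((k:ℝ)+1) = 1 :=
        (Finset.add_sum_erase _ (fun r => (a r : ℝ) / ((k:ℝ)+1)) (Finset.mem_univ 0)).trans
          hsum_a_1
      linarith
    rw [h0]
    calc |∑ r ∈ Finset.univ.erase 0, ((cnt r : ℝ) / ((M:ℝ)+1) - (a r : ℝ) / ((k:ℝ)+1))|
        ≤ ∑ r ∈ Finset.univ.erase 0, |(cnt r : ℝ) / ((M:ℝ)+1) - (a r : ℝ) / ((k:ℝ)+1)| :=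
          Finset.abs_sum_le_sum_abs _ _
    _ ≤ ∑ _r ∈ (Finset.univ : Finset (Fin (p+1))).erase 0, 1 / ((k:ℝ)+1) := by
          apply Finset.sum_le_sum
          intro r hr
          rw [abs_sub_comm]
          exact herr r (Finset.ne_of_mem_erase hr)
    _ = (p:ℝ) / ((k:ℝ)+1) := by
          rw [Finset.sum_const, nsmul_eq_mul]
          have : ((Finset.univ : Finset (Fin (p+1))).erase 0).card = p := by
            rw [Finset.card_erase_of_mem (Finset.mem_univ 0), Finset.card_univ]
            simp
          rw [this]
          ring
  have htotal : ∑ r, |(a r : ℝ) / ((k:ℝ)+1) - (cnt r : ℝ) / ((M:ℝ)+1)|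
      ≤ 2 * ((p:ℝ)+1) / ((k:ℝ)+1) := by
    rw [← Finset.add_sum_erase _ _ (Finset.mem_univ 0)]
    have hb : ∑ r ∈ Finset.univ.erase 0, |(a r : ℝ) / ((k:ℝ)+1) - (cnt r : ℝ) / ((M:ℝ)+1)|
        ≤ (p:ℝ) / ((k:ℝ)+1) := by
      calc _ ≤ ∑ _r ∈ (Finset.univ : Finset (Fin (p+1))).erase 0, 1 / ((k:ℝ)+1) :=
            Finset.sum_le_sum (fun r hr => herr r (Finset.ne_of_mem_erase hr))
      _ = (p:ℝ) / ((k:ℝ)+1) := by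
          rw [Finset.sum_const, nsmul_eq_mul]
          have : ((Finset.univ : Finset (Fin (p+1))).erase 0).card = p := by
            rw [Finset.card_erase_of_mem (Finset.mem_univ 0), Finset.card_univ]
            simp
          rw [this]
          ring
    have hp0 : (0:ℝ) ≤ (p:ℝ) := Nat.cast_nonneg p
    have h1k : (0:ℝ) < 1 / ((k:ℝ)+1) := by positivity
    calc |(a 0 : ℝ) / ((k:ℝ)+1) - (cnt 0 : ℝ) / ((M:ℝ)+1)|
          + ∑ r ∈ Finset.univ.erase 0, |(a r : ℝ) / ((k:ℝ)+1) - (cnt r : ℝ) / ((M:ℝ)+1)|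
        ≤ (p:ℝ) / ((k:ℝ)+1) + (p:ℝ) / ((k:ℝ)+1) := add_le_add herr0 hb
    _ ≤ 2 * ((p:ℝ)+1) / ((k:ℝ)+1) := by
        rw [← add_div, div_le_div_iff₀ hk1 hk1]
        nlinarith
  -- pointwise closeness of x and w∘c'
  have hclose : dKR (empMeasure x) (empMeasure (w ∘ c')) ≤ ε :=
    dkr_emp_pointwise x (w ∘ c') (fun i => (hc' i).le)
  have hclose' : dKR (empMeasure (w ∘ c')) (empMeasure x) ≤ ε :=
    dkr_emp_pointwise (w ∘ c') x (fun i => by rw [dist_comm]; exact (hc' i).le)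
  -- dKR between the two discrete measures
  have hdisc : dKR (empMeasure (w ∘ c')) (empMeasure (w ∘ c)) ≤ ε ∧
      dKR (empMeasure (w ∘ c)) (empMeasure (w ∘ c')) ≤ ε := by
    have hgen : ∀ ψ : X → ℝ, (∀ b, |ψ b| ≤ dXd X) →
        |(∑ i, ψ ((w ∘ c') i)) / ((M:ℝ) + 1) - (∑ j, ψ ((w ∘ c) j)) / ((k:ℝ) + 1)| ≤ ε := by
      intro ψ hψ
      have e1 : (∑ i, ψ ((w ∘ c') i)) / ((M:ℝ) + 1) = ∑ r, (cnt r : ℝ) / ((M:ℝ)+1) * ψ (w r) := by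
        rw [show (∑ i, ψ ((w ∘ c') i)) = ∑ i, ψ (w (c' i)) from rfl, hsum_x' ψ, Finset.sum_div]
        apply Finset.sum_congr rfl
        intro r _
        ring
      have e2 : (∑ j, ψ ((w ∘ c) j)) / ((k:ℝ) + 1) = ∑ r, (a r : ℝ) / ((k:ℝ)+1) * ψ (w r) := by
        rw [show (∑ j, ψ ((w ∘ c) j)) = ∑ j, ψ (w (c j)) from rfl, hsum_u ψ, Finset.sum_div]
        apply Finset.sum_congr rfl
        intro r _
        ring
      rw [e1, e2, ← Finset.sum_sub_distrib]
      calc |∑ r, ((cnt r : ℝ) / ((M:ℝ)+1) * ψ (w r) - (a r : ℝ) / ((k:ℝ)+1) * ψ (w r))|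
          ≤ ∑ r, |(cnt r : ℝ) / ((M:ℝ)+1) * ψ (w r) - (a r : ℝ) / ((k:ℝ)+1) * ψ (w r)| :=
            Finset.abs_sum_le_sum_abs _ _
      _ ≤ ∑ r, |(a r : ℝ) / ((k:ℝ)+1) - (cnt r : ℝ) / ((M:ℝ)+1)| * dXd X := by
            apply Finset.sum_le_sum
            intro r _
            rw [show (cnt r : ℝ) / ((M:ℝ)+1) * ψ (w r) - (a r : ℝ) / ((k:ℝ)+1) * ψ (w r)
              = ((cnt r : ℝ) / ((M:ℝ)+1) - (a r : ℝ) / ((k:ℝ)+1)) * ψ (w r) from by ring]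
            rw [abs_mul, abs_sub_comm]
            exact mul_le_mul_of_nonneg_left (hψ _) (abs_nonneg _)
      _ = (∑ r, |(a r : ℝ) / ((k:ℝ)+1) - (cnt r : ℝ) / ((M:ℝ)+1)|) * dXd X := by
            rw [Finset.sum_mul]
      _ ≤ (2 * ((p:ℝ)+1) / ((k:ℝ)+1)) * dXd X :=
            mul_le_mul_of_nonneg_right htotal (dXd_nonneg (X := X))
      _ ≤ ε := by
            calc (2 * ((p:ℝ)+1) / ((k:ℝ)+1)) * dXd X
                = 2 * ((p:ℝ)+1) * dXd X / ((k:ℝ)+1) := by ring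
            _ ≤ ε := hk
    constructor
    · apply dkr_emp_le
      intro ψ h1 h2
      exact le_trans (le_abs_self _) (hgen ψ h2)
    · apply dkr_emp_le
      intro ψ h1 h2
      rw [← neg_sub]
      calc -((∑ i, ψ ((w ∘ c') i)) / ((M:ℝ) + 1) - (∑ j, ψ ((w ∘ c) j)) / ((k:ℝ) + 1))
          ≤ |(∑ i, ψ ((w ∘ c') i)) / ((M:ℝ) + 1) - (∑ j, ψ ((w ∘ c) j)) / ((k:ℝ) + 1)| :=
            neg_le_abs _
      _ ≤ ε := hgen ψ h2
  -- combine by triangle inequality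
  haveI h1 := empMeasure_prob x
  haveI h2 := empMeasure_prob (w ∘ c')
  haveI h3 := empMeasure_prob (w ∘ c)
  constructor
  · calc dKR (empMeasure x) (empMeasure (w ∘ c))
        ≤ dKR (empMeasure x) (empMeasure (w ∘ c')) + dKR (empMeasure (w ∘ c')) (empMeasure (w ∘ c)) :=
          dkr_triangle _ _ _
    _ ≤ 2 * ε := by linarith [hclose, hdisc.1]
  · calc dKR (empMeasure (w ∘ c)) (empMeasure x)
        ≤ dKR (empMeasure (w ∘ c)) (empMeasure (w ∘ c')) + dKR (empMeasure (w ∘ c')) (empMeasure x) :=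
          dkr_triangle _ _ _
    _ ≤ 2 * ε := by linarith [hclose', hdisc.2]

end Aux3

section Aux4

variable {X : Type*} [MetricSpace X] [CompactSpace X] [Nonempty X]
  [MeasurableSpace X] [BorelSpace X]

lemma tendsto_dkr (μ₀ : ProbabilityMeasure X) :
    Tendsto (fun μ : ProbabilityMeasure X => dKR (μ : Measure X) (μ₀ : Measure X))
      (nhds μ₀) (nhds 0) := by
  rw [Metric.tendsto_nhds]
  intro ε hε
  set ε3 : ℝ := ε / 3 with hε3
  have hε3pos : 0 < ε3 := by positivity
  obtain ⟨p, w, hw⟩ := exists_net (X := X) ε3 hε3pos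
  -- partition of unity
  set g : Fin (p+1) → X → ℝ := fun r a => max (ε3 - dist a (w r)) 0 with hg
  have hgcont : ∀ r, Continuous (g r) := fun r =>
    (continuous_const.sub (continuous_id.dist continuous_const)).max continuous_const
  have hgnonneg : ∀ r a, 0 ≤ g r a := fun r a => le_max_right _ _
  set S : X → ℝ := fun a => ∑ r, g r a with hS
  have hScont : Continuous S := continuous_finset_sum _ (fun r _ => hgcont r)
  have hSpos : ∀ a, 0 < S a := by
    intro a
    obtain ⟨r, hr⟩ := hw a
    exact Finset.sum_pos' (fun r' _ => hgnonneg r' a)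
      ⟨r, Finset.mem_univ r, lt_max_of_lt_left (by linarith)⟩
  set χ : Fin (p+1) → X → ℝ := fun r a => g r a / S a with hχ
  have hχcont : ∀ r, Continuous (χ r) := fun r => (hgcont r).div hScont (fun a => (hSpos a).ne')
  have hχnonneg : ∀ r a, 0 ≤ χ r a := fun r a => div_nonneg (hgnonneg r a) (hSpos a).le
  have hχsum : ∀ a, ∑ r, χ r a = 1 := by
    intro a
    rw [hχ]
    simp only
    rw [← Finset.sum_div]
    exact div_self (hSpos a).ne'
  have hχsupp : ∀ r a, χ r a ≠ 0 → dist a (w r) < ε3 := by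
    intro r a hne
    by_contra hge
    push_neg at hge
    apply hne
    rw [hχ]
    simp only
    rw [div_eq_zero_iff]
    left
    rw [hg]
    simp only
    rw [max_eq_right (by linarith)]
  -- pointwise estimate
  have hpoint : ∀ (μ : ProbabilityMeasure X),
      dKR (μ : Measure X) (μ₀ : Measure X) ≤ 2 * ε3 +
        (∑ r, |∫ a, χ r a ∂(μ : Measure X) - ∫ a, χ r a ∂(μ₀ : Measure X)|) * dXd X := by
    intro μ
    apply dkr_le'
    intro ψ h1 h2
    have hint : ∀ (ν : Measure X), IsProbabilityMeasure ν → ∀ (f : X → ℝ), Continuous f →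
        Integrable f ν := by
      intro ν hν f hf
      haveI := hν
      exact lip_integrable f hf ν
    -- decomposition of ∫ψ
    have hdecomp : ∀ (ν : Measure X), IsProbabilityMeasure ν →
        ∫ a, ψ a ∂ν = ∑ r, ∫ a, χ r a * ψ a ∂ν := by
      intro ν hν
      haveI := hν
      rw [← integral_finset_sum _ (fun r _ => hint ν hν (fun a => χ r a * ψ a) ((hχcont r).mul h1.continuous))]
      congr 1
      funext a
      rw [← Finset.sum_mul, hχsum a, one_mul]
    have hterm : ∀ (ν : Measure X), IsProbabilityMeasure ν → ∀ r,
        |∫ a, χ r a * ψ a ∂ν - (∫ a, χ r a ∂ν) * ψ (w r)| ≤ ε3 * ∫ a, χ r a ∂ν := by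
      intro ν hν r
      haveI := hν
      have hrw : (∫ a, χ r a ∂ν) * ψ (w r) = ∫ a, χ r a * ψ (w r) ∂ν := by
        rw [integral_mul_const]
      rw [hrw, ← integral_sub (hint ν hν (fun a => χ r a * ψ a) ((hχcont r).mul h1.continuous))
        (hint ν hν (fun a => χ r a * ψ (w r)) ((hχcont r).mul continuous_const))]
      have hptbd : ∀ a, |χ r a * ψ a - χ r a * ψ (w r)| ≤ ε3 * χ r a := by
        intro a
        rw [← mul_sub, abs_mul, abs_of_nonneg (hχnonneg r a)]
        by_cases hz : χ r a = 0
        · rw [hz]; simp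
        · have hd := hχsupp r a hz
          have : |ψ a - ψ (w r)| ≤ ε3 := by
            calc |ψ a - ψ (w r)| = dist (ψ a) (ψ (w r)) := (Real.dist_eq _ _).symm
            _ ≤ 1 * dist a (w r) := h1.dist_le_mul _ _
            _ ≤ ε3 := by rw [one_mul]; exact hd.le
          calc χ r a * |ψ a - ψ (w r)| ≤ χ r a * ε3 :=
            mul_le_mul_of_nonneg_left this (hχnonneg r a)
          _ = ε3 * χ r a := mul_comm _ _
      calc |∫ a, (χ r a * ψ a - χ r a * ψ (w r)) ∂ν|
          ≤ ∫ a, |χ r a * ψ a - χ r a * ψ (w r)| ∂ν := by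
            have := norm_integral_le_integral_norm (μ := ν)
              (fun a => χ r a * ψ a - χ r a * ψ (w r))
            simpa [Real.norm_eq_abs] using this
      _ ≤ ∫ a, ε3 * χ r a ∂ν := by
          apply integral_mono _ (hint ν hν _ (continuous_const.mul (hχcont r))) hptbd
          apply Integrable.abs
          exact (hint ν hν _ (((hχcont r).mul h1.continuous).sub
            ((hχcont r).mul continuous_const)))
      _ = ε3 * ∫ a, χ r a ∂ν := integral_const_mul _ _
    have hχint1 : ∀ (ν : Measure X), IsProbabilityMeasure ν →
        ∑ r, ∫ a, χ r a ∂ν = 1 := by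
      intro ν hν
      haveI := hν
      rw [← integral_finset_sum _ (fun r _ => hint ν hν _ (hχcont r))]
      have : ∀ a, ∑ r, χ r a = 1 := hχsum
      calc ∫ a, (∑ r, χ r a) ∂ν = ∫ _a, (1:ℝ) ∂ν := by
            congr 1; funext a; exact this a
      _ = 1 := by simp
    haveI hμp : IsProbabilityMeasure (μ : Measure X) := μ.prop
    haveI hμ0p : IsProbabilityMeasure (μ₀ : Measure X) := μ₀.prop
    have hχintnn : ∀ (ν : Measure X), IsProbabilityMeasure ν → ∀ r,
        0 ≤ ∫ a, χ r a ∂ν := by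
      intro ν hν r
      haveI := hν
      exact integral_nonneg (hχnonneg r)
    -- assemble
    have key : ∫ a, ψ a ∂(μ : Measure X) - ∫ a, ψ a ∂(μ₀ : Measure X)
        = (∑ r, (∫ a, χ r a * ψ a ∂(μ : Measure X) - (∫ a, χ r a ∂(μ : Measure X)) * ψ (w r)))
        + (∑ r, (∫ a, χ r a ∂(μ : Measure X) - ∫ a, χ r a ∂(μ₀ : Measure X)) * ψ (w r))
        + (∑ r, ((∫ a, χ r a ∂(μ₀ : Measure X)) * ψ (w r) - ∫ a, χ r a * ψ a ∂(μ₀ : Measure X))) := by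
      rw [hdecomp _ hμp, hdecomp _ hμ0p]
      rw [← Finset.sum_add_distrib, ← Finset.sum_add_distrib, ← Finset.sum_sub_distrib]
      apply Finset.sum_congr rfl
      intro r _
      ring
    rw [key]
    have hb1 : ∑ r, (∫ a, χ r a * ψ a ∂(μ : Measure X) - (∫ a, χ r a ∂(μ : Measure X)) * ψ (w r))
        ≤ ε3 := by
      calc _ ≤ ∑ r, ε3 * ∫ a, χ r a ∂(μ : Measure X) := by
            apply Finset.sum_le_sum
            intro r _
            exact le_trans (le_abs_self _) (hterm _ hμp r)
      _ = ε3 * ∑ r, ∫ a, χ r a ∂(μ : Measure X) := by rw [Finset.mul_sum]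
      _ = ε3 := by rw [hχint1 _ hμp, mul_one]
    have hb3 : ∑ r, ((∫ a, χ r a ∂(μ₀ : Measure X)) * ψ (w r) - ∫ a, χ r a * ψ a ∂(μ₀ : Measure X))
        ≤ ε3 := by
      calc _ ≤ ∑ r, ε3 * ∫ a, χ r a ∂(μ₀ : Measure X) := by
            apply Finset.sum_le_sum
            intro r _
            rw [← neg_sub]
            exact le_trans (neg_le_abs _) (hterm _ hμ0p r)
      _ = ε3 * ∑ r, ∫ a, χ r a ∂(μ₀ : Measure X) := by rw [Finset.mul_sum]
      _ = ε3 := by rw [hχint1 _ hμ0p, mul_one]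
    have hb2 : ∑ r, (∫ a, χ r a ∂(μ : Measure X) - ∫ a, χ r a ∂(μ₀ : Measure X)) * ψ (w r)
        ≤ (∑ r, |∫ a, χ r a ∂(μ : Measure X) - ∫ a, χ r a ∂(μ₀ : Measure X)|) * dXd X := by
      rw [Finset.sum_mul]
      apply Finset.sum_le_sum
      intro r _
      calc (∫ a, χ r a ∂(μ : Measure X) - ∫ a, χ r a ∂(μ₀ : Measure X)) * ψ (w r)
          ≤ |(∫ a, χ r a ∂(μ : Measure X) - ∫ a, χ r a ∂(μ₀ : Measure X)) * ψ (w r)| :=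
            le_abs_self _
      _ = |∫ a, χ r a ∂(μ : Measure X) - ∫ a, χ r a ∂(μ₀ : Measure X)| * |ψ (w r)| := abs_mul _ _
      _ ≤ |∫ a, χ r a ∂(μ : Measure X) - ∫ a, χ r a ∂(μ₀ : Measure X)| * dXd X :=
            mul_le_mul_of_nonneg_left (h2 _) (abs_nonneg _)
    linarith
  -- the integrals converge
  have hconv : Tendsto (fun μ : ProbabilityMeasure X =>
      ∑ r, |∫ a, χ r a ∂(μ : Measure X) - ∫ a, χ r a ∂(μ₀ : Measure X)|) (nhds μ₀) (nhds 0) := by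
    have h0 : (0:ℝ) = ∑ _r : Fin (p+1), (0:ℝ) := by simp
    rw [h0]
    apply tendsto_finset_sum
    intro r _
    have hbcf : Tendsto (fun μ : ProbabilityMeasure X => ∫ a, χ r a ∂(μ : Measure X))
        (nhds μ₀) (nhds (∫ a, χ r a ∂(μ₀ : Measure X))) := by
      have := MeasureTheory.ProbabilityMeasure.tendsto_iff_forall_integral_tendsto
        (γ := ProbabilityMeasure X) (F := nhds μ₀) (μs := id) (μ := μ₀)
      have happ := this.mp tendsto_id (BoundedContinuousFunction.mkOfCompact ⟨χ r, hχcont r⟩)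
      simpa using happ
    have h2' : Tendsto (fun μ : ProbabilityMeasure X =>
        |∫ a, χ r a ∂(μ : Measure X) - ∫ a, χ r a ∂(μ₀ : Measure X)|) (nhds μ₀) (nhds 0) := by
      have hsub : Tendsto (fun μ : ProbabilityMeasure X =>
          ∫ a, χ r a ∂(μ : Measure X) - ∫ a, χ r a ∂(μ₀ : Measure X)) (nhds μ₀) (nhds 0) := by
        have := hbcf.sub (tendsto_const_nhds
          (x := ∫ a, χ r a ∂(μ₀ : Measure X)) (f := nhds μ₀))
        simpa using this
      have := hsub.abs
      simpa using this
    exact h2'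
  -- conclude
  have hfinal : Tendsto (fun μ : ProbabilityMeasure X =>
      2 * ε3 + (∑ r, |∫ a, χ r a ∂(μ : Measure X) - ∫ a, χ r a ∂(μ₀ : Measure X)|) * dXd X)
      (nhds μ₀) (nhds (2 * ε3)) := by
    have := (hconv.mul_const (dXd X)).const_add (2 * ε3)
    simpa using this
  have hev : ∀ᶠ μ : ProbabilityMeasure X in nhds μ₀,
      2 * ε3 + (∑ r, |∫ a, χ r a ∂(μ : Measure X) - ∫ a, χ r a ∂(μ₀ : Measure X)|) * dXd X
        < ε := by
    apply hfinal.eventually_lt_const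
    have : 0 < ε3 := hε3pos
    linarith
  filter_upwards [hev] with μ hμ
  haveI : IsProbabilityMeasure (μ : Measure X) := μ.prop
  haveI : IsProbabilityMeasure ((μ₀ : Measure X)) := μ₀.prop
  rw [Real.dist_eq, sub_zero, abs_of_nonneg (dkr_nonneg _ _)]
  exact lt_of_le_of_lt (hpoint μ) hμ

end Aux4


/-- Existence of mean field limits of symmetric, uniformly bounded, uniformly
Lipschitz functions `f_M : X^M × Z → ℝ`: a subsequence converges in mean field, uniformly on
`X^{M_ℓ} × K` for every compact `K ⊆ Z`, to a continuous `L_f`-Lipschitz function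
`f : P(X) × Z → ℝ` satisfying `|f(μ,z)| ≤ B_F + b(z)`. -/
theorem mean_field_limit_exists {X : Type*} [MetricSpace X] [CompactSpace X] [Nonempty X]
    [MeasurableSpace X] [BorelSpace X]
    {Z : Type*} [MetricSpace Z] [LocallyCompactSpace Z] [SigmaCompactSpace Z]
    (L_f B_f : ℝ) (hL : 0 ≤ L_f) (hBf : 0 ≤ B_f) (b : Z → ℝ) (hb : ∀ z, 0 ≤ b z)
    (f : ∀ M : ℕ, (Fin (M + 1) → X) → Z → ℝ)
    (hsym : ∀ (M : ℕ) (σ : Equiv.Perm (Fin (M + 1))) (x : Fin (M + 1) → X) (z : Z),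
      f M (x ∘ σ) z = f M x z)
    (hBound : ∀ (M : ℕ) (x : Fin (M + 1) → X) (z : Z), |f M x z| ≤ B_f + b z)
    (hLip : ∀ (M : ℕ) (x₁ x₂ : Fin (M + 1) → X) (z₁ z₂ : Z),
      |f M x₁ z₁ - f M x₂ z₂| ≤ L_f * (dKR (empMeasure x₁) (empMeasure x₂) + dist z₁ z₂)) :
    ∃ (φ : ℕ → ℕ), StrictMono φ ∧
      ∃ F : ProbabilityMeasure X → Z → ℝ,
        Continuous (fun p : ProbabilityMeasure X × Z => F p.1 p.2) ∧
        (∀ (μ₁ μ₂ : ProbabilityMeasure X) (z₁ z₂ : Z),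
          |F μ₁ z₁ - F μ₂ z₂| ≤ L_f * (dKR (μ₁ : Measure X) (μ₂ : Measure X) + dist z₁ z₂)) ∧
        (∃ B_F : ℝ, 0 ≤ B_F ∧ ∀ (μ : ProbabilityMeasure X) (z : Z), |F μ z| ≤ B_F + b z) ∧
        (∀ K : Set Z, IsCompact K → ∀ ε : ℝ, 0 < ε → ∃ N : ℕ, ∀ ℓ ≥ N,
          ∀ (x : Fin (φ ℓ + 1) → X), ∀ z ∈ K, |f (φ ℓ) x z - F (empProb x) z| ≤ ε) := by
  classical
  rcases isEmpty_or_nonempty Z with hZe | hZne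
  · -- Z empty : everything is vacuous
    refine ⟨id, strictMono_id, fun _ _ => 0, continuous_const, ?_, ⟨0, le_rfl, ?_⟩, ?_⟩
    · intro μ₁ μ₂ z₁ z₂
      exact isEmptyElim z₁
    · intro μ z
      exact isEmptyElim z
    · intro K _ ε hε
      refine ⟨0, fun ℓ _ x z hz => ?_⟩
      exact isEmptyElim z
  -- dense sequences
  obtain ⟨ζ, hζ⟩ := TopologicalSpace.exists_dense_seq Z
  obtain ⟨ξ, hξ⟩ := TopologicalSpace.exists_dense_seq X
  -- enumeration of grid data
  haveI hne1 : Nonempty ((Σ n : ℕ, (Fin (n + 1) → ℕ)) × ℕ) := ⟨⟨⟨0, fun _ => 0⟩, 0⟩⟩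
  obtain ⟨G, hG⟩ := exists_surjective_nat ((Σ n : ℕ, (Fin (n + 1) → ℕ)) × ℕ)
  set nn : ℕ → ℕ := fun m => (G m).1.1 with hnn_def
  set tup : ∀ m : ℕ, Fin (nn m + 1) → X := fun m i => ξ ((G m).1.2 i) with htup_def
  set pt : ℕ → Z := fun m => ζ (G m).2 with hpt_def
  set v : ℕ → ℕ → ℝ := fun M m => f M (repTuple (tup m) M) (pt m) with hv_def
  have hvbd : ∀ M m, |v M m| ≤ B_f + b (pt m) := fun M m => hBound M _ _
  -- diagonal subsequence
  have hScpt : IsCompact (Set.univ.pi (fun m : ℕ => Set.Icc (-(B_f + b (pt m))) (B_f + b (pt m)))) :=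
    isCompact_univ_pi (fun m => isCompact_Icc)
  have hvS : ∀ M, v M ∈ Set.univ.pi (fun m : ℕ => Set.Icc (-(B_f + b (pt m))) (B_f + b (pt m))) := by
    intro M
    rw [Set.mem_univ_pi]
    intro m
    rcases abs_le.mp (hvbd M m) with ⟨h1, h2⟩
    exact ⟨h1, h2⟩
  obtain ⟨V, _, φ, hφmono, hφtend⟩ := hScpt.tendsto_subseq hvS
  have hVm : ∀ m, Tendsto (fun ℓ => v (φ ℓ) m) atTop (nhds (V m)) := by
    intro m
    exact tendsto_pi_nhds.mp hφtend m
  -- probability instances for grid measures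
  haveI hEmP : ∀ m, IsProbabilityMeasure (empMeasure (tup m)) := fun m => empMeasure_prob (tup m)
  -- rep error tendsto
  have hdiv : ∀ C : ℝ, 0 ≤ C → Tendsto (fun ℓ : ℕ => C / ((φ ℓ : ℝ) + 1)) atTop (nhds 0) := by
    intro C hC
    have hbnd : ∀ ℓ : ℕ, C / ((φ ℓ : ℝ) + 1) ≤ C / ((ℓ : ℝ) + 1) := by
      intro ℓ
      gcongr
      exact_mod_cast hφmono.le_apply
    have hg : Tendsto (fun ℓ : ℕ => C / ((ℓ : ℝ) + 1)) atTop (nhds 0) := by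
      have h := (tendsto_const_div_atTop_nhds_zero_nat C).comp (tendsto_add_atTop_nat 1)
      have heq : ((fun n : ℕ => C / (n : ℝ)) ∘ (fun n => n + 1)) = fun ℓ : ℕ => C / ((ℓ : ℝ) + 1) := by
        funext ℓ
        simp only [Function.comp_apply]
        push_cast
        ring
      rw [heq] at h
      exact h
    exact squeeze_zero (fun ℓ => by positivity) hbnd hg
  -- consistency of the limits V
  have hcons : ∀ m m', V m - V m' ≤
      L_f * (dKR (empMeasure (tup m)) (empMeasure (tup m')) + dist (pt m) (pt m')) := by
    intro m m'
    have hstep : ∀ ℓ : ℕ, v (φ ℓ) m - v (φ ℓ) m' ≤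
        L_f * (dKR (empMeasure (tup m)) (empMeasure (tup m')) + dist (pt m) (pt m'))
        + L_f * (2 * ((nn m : ℝ) + 1) * dXd X / ((φ ℓ : ℝ) + 1)
                 + 2 * ((nn m' : ℝ) + 1) * dXd X / ((φ ℓ : ℝ) + 1)) := by
      intro ℓ
      set M := φ ℓ
      haveI := empMeasure_prob (repTuple (tup m) M)
      haveI := empMeasure_prob (repTuple (tup m') M)
      have h := hLip M (repTuple (tup m) M) (repTuple (tup m') M) (pt m) (pt m')
      have htri : dKR (empMeasure (repTuple (tup m) M)) (empMeasure (repTuple (tup m') M))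
          ≤ 2 * ((nn m : ℝ) + 1) * dXd X / ((M : ℝ) + 1)
            + dKR (empMeasure (tup m)) (empMeasure (tup m'))
            + 2 * ((nn m' : ℝ) + 1) * dXd X / ((M : ℝ) + 1) := by
        have t1 := dkr_triangle (empMeasure (repTuple (tup m) M)) (empMeasure (tup m))
          (empMeasure (repTuple (tup m') M))
        have t2 := dkr_triangle (empMeasure (tup m)) (empMeasure (tup m'))
          (empMeasure (repTuple (tup m') M))
        have r1 := (dkr_rep (tup m) M).1
        have r2 := (dkr_rep (tup m') M).2
        linarith
      have h2 : v M m - v M m' ≤ L_f * (dKR (empMeasure (repTuple (tup m) M))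
          (empMeasure (repTuple (tup m') M)) + dist (pt m) (pt m')) :=
        le_trans (le_abs_self _) h
      have h3 : L_f * (dKR (empMeasure (repTuple (tup m) M))
          (empMeasure (repTuple (tup m') M)) + dist (pt m) (pt m'))
          ≤ L_f * ((2 * ((nn m : ℝ) + 1) * dXd X / ((M : ℝ) + 1)
            + dKR (empMeasure (tup m)) (empMeasure (tup m'))
            + 2 * ((nn m' : ℝ) + 1) * dXd X / ((M : ℝ) + 1)) + dist (pt m) (pt m')) := by
        apply mul_le_mul_of_nonneg_left _ hL
        linarith
      calc v M m - v M m' ≤ _ := h2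
      _ ≤ _ := h3
      _ = L_f * (dKR (empMeasure (tup m)) (empMeasure (tup m')) + dist (pt m) (pt m'))
          + L_f * (2 * ((nn m : ℝ) + 1) * dXd X / ((M : ℝ) + 1)
            + 2 * ((nn m' : ℝ) + 1) * dXd X / ((M : ℝ) + 1)) := by ring
    have hlhs : Tendsto (fun ℓ => v (φ ℓ) m - v (φ ℓ) m') atTop (nhds (V m - V m')) :=
      (hVm m).sub (hVm m')
    have hrhs : Tendsto (fun ℓ : ℕ =>
        L_f * (dKR (empMeasure (tup m)) (empMeasure (tup m')) + dist (pt m) (pt m'))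
        + L_f * (2 * ((nn m : ℝ) + 1) * dXd X / ((φ ℓ : ℝ) + 1)
                 + 2 * ((nn m' : ℝ) + 1) * dXd X / ((φ ℓ : ℝ) + 1))) atTop
        (nhds (L_f * (dKR (empMeasure (tup m)) (empMeasure (tup m')) + dist (pt m) (pt m')))) := by
      have e1 := hdiv (2 * ((nn m : ℝ) + 1) * dXd X)
        (mul_nonneg (by positivity) (dXd_nonneg (X := X)))
      have e2 := hdiv (2 * ((nn m' : ℝ) + 1) * dXd X)
        (mul_nonneg (by positivity) (dXd_nonneg (X := X)))
      have := ((e1.add e2).const_mul L_f).const_add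
        (L_f * (dKR (empMeasure (tup m)) (empMeasure (tup m')) + dist (pt m) (pt m')))
      simpa using this
    exact le_of_tendsto_of_tendsto' hlhs hrhs hstep
  -- definition of F
  set term : ProbabilityMeasure X → Z → ℕ → ℝ := fun μ z m =>
    V m + L_f * (dKR (μ : Measure X) (empMeasure (tup m)) + dist z (pt m)) with hterm_def
  have hterm_lb : ∀ (μ : ProbabilityMeasure X) (z : Z) (m : ℕ),
      V 0 - L_f * (dKR (empMeasure (tup 0)) (μ : Measure X) + dist (pt 0) z) ≤ term μ z m := by
    intro μ z m
    haveI : IsProbabilityMeasure (μ : Measure X) := μ.prop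
    have h1 := hcons 0 m
    have htri := dkr_triangle (empMeasure (tup 0)) (μ : Measure X) (empMeasure (tup m))
    have hd : dist (pt 0) (pt m) ≤ dist (pt 0) z + dist z (pt m) := dist_triangle _ _ _
    have h2 : dKR (empMeasure (tup 0)) (empMeasure (tup m)) + dist (pt 0) (pt m)
        ≤ (dKR (empMeasure (tup 0)) (μ : Measure X) + dist (pt 0) z)
          + (dKR (μ : Measure X) (empMeasure (tup m)) + dist z (pt m)) := by linarith
    have h3 := mul_le_mul_of_nonneg_left h2 hL
    have h4 : L_f * ((dKR (empMeasure (tup 0)) (μ : Measure X) + dist (pt 0) z)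
          + (dKR (μ : Measure X) (empMeasure (tup m)) + dist z (pt m)))
        = L_f * (dKR (empMeasure (tup 0)) (μ : Measure X) + dist (pt 0) z)
          + L_f * (dKR (μ : Measure X) (empMeasure (tup m)) + dist z (pt m)) := by ring
    rw [hterm_def]
    simp only
    linarith [h1, h3, h4]
  have hbdd : ∀ (μ : ProbabilityMeasure X) (z : Z), BddBelow (Set.range (term μ z)) := by
    intro μ z
    exact ⟨V 0 - L_f * (dKR (empMeasure (tup 0)) (μ : Measure X) + dist (pt 0) z),
      by rintro - ⟨m, rfl⟩; exact hterm_lb μ z m⟩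
  set F : ProbabilityMeasure X → Z → ℝ := fun μ z => ⨅ m : ℕ, term μ z m with hF_def
  have hFle : ∀ (μ : ProbabilityMeasure X) (z : Z) (m : ℕ), F μ z ≤ term μ z m := by
    intro μ z m
    exact ciInf_le (hbdd μ z) m
  have hFge : ∀ (μ : ProbabilityMeasure X) (z : Z) (c : ℝ),
      (∀ m, c ≤ term μ z m) → c ≤ F μ z := by
    intro μ z c h
    exact le_ciInf h
  -- one-sided Lipschitz estimate
  have hFlip1 : ∀ (μ₁ μ₂ : ProbabilityMeasure X) (z₁ z₂ : Z),
      F μ₁ z₁ - F μ₂ z₂ ≤ L_f * (dKR (μ₁ : Measure X) (μ₂ : Measure X) + dist z₁ z₂) := by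
    intro μ₁ μ₂ z₁ z₂
    haveI : IsProbabilityMeasure (μ₁ : Measure X) := μ₁.prop
    haveI : IsProbabilityMeasure (μ₂ : Measure X) := μ₂.prop
    have key : F μ₁ z₁ - L_f * (dKR (μ₁ : Measure X) (μ₂ : Measure X) + dist z₁ z₂)
        ≤ F μ₂ z₂ := by
      apply hFge
      intro m
      have h1 : F μ₁ z₁ ≤ term μ₁ z₁ m := hFle μ₁ z₁ m
      have htri := dkr_triangle (μ₁ : Measure X) (μ₂ : Measure X) (empMeasure (tup m))
      have hd : dist z₁ (pt m) ≤ dist z₁ z₂ + dist z₂ (pt m) := dist_triangle _ _ _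
      have h2 : dKR (μ₁ : Measure X) (empMeasure (tup m)) + dist z₁ (pt m)
          ≤ (dKR (μ₁ : Measure X) (μ₂ : Measure X) + dist z₁ z₂)
            + (dKR (μ₂ : Measure X) (empMeasure (tup m)) + dist z₂ (pt m)) := by linarith
      have h3 := mul_le_mul_of_nonneg_left h2 hL
      have h4 : L_f * ((dKR (μ₁ : Measure X) (μ₂ : Measure X) + dist z₁ z₂)
            + (dKR (μ₂ : Measure X) (empMeasure (tup m)) + dist z₂ (pt m)))
          = L_f * (dKR (μ₁ : Measure X) (μ₂ : Measure X) + dist z₁ z₂)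
            + L_f * (dKR (μ₂ : Measure X) (empMeasure (tup m)) + dist z₂ (pt m)) := by ring
      rw [hterm_def] at h1 ⊢
      simp only at h1 ⊢
      linarith [h1, h3, h4]
    linarith [key]
  have hFlip : ∀ (μ₁ μ₂ : ProbabilityMeasure X) (z₁ z₂ : Z),
      |F μ₁ z₁ - F μ₂ z₂| ≤ L_f * (dKR (μ₁ : Measure X) (μ₂ : Measure X) + dist z₁ z₂) := by
    intro μ₁ μ₂ z₁ z₂
    haveI : IsProbabilityMeasure (μ₁ : Measure X) := μ₁.prop
    haveI : IsProbabilityMeasure (μ₂ : Measure X) := μ₂.prop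
    rw [abs_sub_le_iff]
    constructor
    · exact hFlip1 μ₁ μ₂ z₁ z₂
    · have := hFlip1 μ₂ μ₁ z₂ z₁
      rw [dkr_symm (μ₂ : Measure X) (μ₁ : Measure X), dist_comm z₂ z₁] at this
      exact this
  -- value of F at grid points
  have hFval : ∀ m, F (empProb (tup m)) (pt m) = V m := by
    intro m
    apply le_antisymm
    · have := hFle (empProb (tup m)) (pt m) m
      rw [hterm_def] at this
      simp only at this
      have hco : ((empProb (tup m) : ProbabilityMeasure X) : Measure X) = empMeasure (tup m) := rfl
      rw [hco, dkr_self, dist_self] at this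
      simpa using this
    · apply hFge
      intro m'
      rw [hterm_def]
      simp only
      have h1 := hcons m m'
      have hco : ((empProb (tup m) : ProbabilityMeasure X) : Measure X) = empMeasure (tup m) := rfl
      rw [hco]
      linarith
  have hconvK : ∀ K : Set Z, IsCompact K → ∀ ε : ℝ, 0 < ε → ∃ N : ℕ, ∀ ℓ ≥ N,
      ∀ (x : Fin (φ ℓ + 1) → X), ∀ z ∈ K, |f (φ ℓ) x z - F (empProb x) z| ≤ ε := by
    intro K hK ε hε
    set η := ε / (8 * (L_f + 1)) with hη_def
    have hLp : (0:ℝ) < L_f + 1 := by linarith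
    have hηpos : 0 < η := by rw [hη_def]; positivity
    obtain ⟨p, w₀, hw₀⟩ := exists_net (X := X) (η/2) (by positivity)
    have hcode : ∀ r : Fin (p+1), ∃ nnn : ℕ, dist (w₀ r) (ξ nnn) < η/2 := by
      intro r
      exact Metric.denseRange_iff.mp hξ (w₀ r) (η/2) (by positivity)
    choose code hcode' using hcode
    have hw : ∀ a : X, ∃ r, dist a ((fun r => ξ (code r)) r) < η := by
      intro a
      obtain ⟨r, hr⟩ := hw₀ a
      refine ⟨r, ?_⟩
      calc dist a (ξ (code r)) ≤ dist a (w₀ r) + dist (w₀ r) (ξ (code r)) := dist_triangle _ _ _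
      _ < η/2 + η/2 := add_lt_add hr (hcode' r)
      _ = η := by ring
    obtain ⟨k, hk⟩ : ∃ k : ℕ, 2 * ((p:ℝ)+1) * dXd X / ((k:ℝ)+1) ≤ η := by
      obtain ⟨k, hk'⟩ := exists_nat_gt (2 * ((p:ℝ)+1) * dXd X / η)
      refine ⟨k, ?_⟩
      rw [div_le_iff₀ (by positivity)]
      rw [div_lt_iff₀ hηpos] at hk'
      nlinarith [hηpos]
    have hquant := quantize (X := X) η hηpos (fun r => ξ (code r)) hw k hk
    have hKcov : K ⊆ ⋃ q : ℕ, Metric.ball (ζ q) η := by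
      intro z _
      obtain ⟨q, hq⟩ := Metric.denseRange_iff.mp hζ z η hηpos
      exact Set.mem_iUnion.mpr ⟨q, Metric.mem_ball.mpr hq⟩
    obtain ⟨T, hT⟩ := hK.elim_finite_subcover (fun q : ℕ => Metric.ball (ζ q) η)
      (fun q => Metric.isOpen_ball) hKcov
    have hmsel : ∀ (c : Fin (k+1) → Fin (p+1)) (q : ℕ),
        G ((hG (⟨⟨k, fun i => code (c i)⟩, q⟩ :
          (Σ n : ℕ, (Fin (n + 1) → ℕ)) × ℕ)).choose) = ⟨⟨k, fun i => code (c i)⟩, q⟩ :=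
      fun c q => (hG _).choose_spec
    set msel : (Fin (k+1) → Fin (p+1)) → ℕ → ℕ := fun c q =>
      (hG (⟨⟨k, fun i => code (c i)⟩, q⟩ :
        (Σ n : ℕ, (Fin (n + 1) → ℕ)) × ℕ)).choose with hmsel_def
    have hmsel_pt : ∀ c q, pt (msel c q) = ζ q := by
      intro c q
      rw [hpt_def]
      simp only [hmsel_def]
      rw [hmsel c q]
    have hmsel_nn : ∀ c q, nn (msel c q) = k := by
      intro c q
      rw [hnn_def]
      simp only [hmsel_def]
      rw [hmsel c q]
    have hmsel_Em : ∀ c q, empMeasure (tup (msel c q))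
        = empMeasure ((fun r => ξ (code r)) ∘ c) := by
      intro c q
      have hgen : ∀ (σ : Σ n : ℕ, (Fin (n+1) → ℕ)), σ = ⟨k, fun i => code (c i)⟩ →
          empMeasure (fun i : Fin (σ.1+1) => ξ (σ.2 i))
            = empMeasure ((fun r => ξ (code r)) ∘ c) := by
        rintro σ rfl
        rfl
      exact hgen (G (msel c q)).1 (by rw [hmsel_def]; simp only; rw [hmsel c q])
    have hNm : ∀ m : ℕ, ∃ N : ℕ, ∀ ℓ ≥ N, |v (φ ℓ) m - V m| ≤ η := by
      intro m
      have h := hVm m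
      rw [Metric.tendsto_atTop] at h
      obtain ⟨N, hN⟩ := h η hηpos
      exact ⟨N, fun ℓ hℓ => by have := hN ℓ hℓ; rw [Real.dist_eq] at this; exact this.le⟩
    choose Nm hNm' using hNm
    classical
    set Mset : Finset ℕ := ((Finset.univ : Finset (Fin (k+1) → Fin (p+1))) ×ˢ T).image
      (fun cq => msel cq.1 cq.2) with hMset_def
    obtain ⟨N2, hN2⟩ : ∃ N2 : ℕ, ∀ M ≥ N2, 2 * ((k:ℝ)+1) * dXd X / ((M:ℝ)+1) ≤ η := by
      obtain ⟨N2, hN2'⟩ := exists_nat_gt (2 * ((k:ℝ)+1) * dXd X / η)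
      refine ⟨N2, fun M hM => ?_⟩
      rw [div_le_iff₀ (by positivity)]
      rw [div_lt_iff₀ hηpos] at hN2'
      have hMc : (N2:ℝ) ≤ (M:ℝ) := by exact_mod_cast hM
      nlinarith [hηpos]
    refine ⟨max (Mset.sup Nm) N2, fun ℓ hℓ x z hzK => ?_⟩
    obtain ⟨c, hc1, hc2⟩ := hquant (φ ℓ) x
    obtain ⟨q, hqT, hq⟩ := Set.mem_iUnion₂.mp (hT hzK)
    have hmM : msel c q ∈ Mset :=
      Finset.mem_image.mpr ⟨(c, q), Finset.mem_product.mpr ⟨Finset.mem_univ _, hqT⟩, rfl⟩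
    have hℓN1 : ℓ ≥ Nm (msel c q) :=
      le_trans (Finset.le_sup hmM) (le_trans (le_max_left _ N2) hℓ)
    have hA2 : |v (φ ℓ) (msel c q) - V (msel c q)| ≤ η := hNm' (msel c q) ℓ hℓN1
    have hMge : φ ℓ ≥ N2 := le_trans (le_trans (le_max_right _ N2) hℓ) hφmono.le_apply
    have hrepErr : 2 * ((nn (msel c q) : ℝ)+1) * dXd X / ((φ ℓ : ℝ)+1) ≤ η := by
      rw [hmsel_nn c q]
      exact hN2 (φ ℓ) hMge
    have hdz : dist z (pt (msel c q)) ≤ η := by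
      rw [hmsel_pt c q]
      exact (Metric.mem_ball.mp hq).le
    haveI := empMeasure_prob x
    haveI := empMeasure_prob ((fun r => ξ (code r)) ∘ c)
    haveI := empMeasure_prob (tup (msel c q))
    haveI := empMeasure_prob (repTuple (tup (msel c q)) (φ ℓ))
    -- step A1
    have hd1 : dKR (empMeasure x) (empMeasure (repTuple (tup (msel c q)) (φ ℓ)))
        ≤ 2*η + η := by
      have t1 := dkr_triangle (empMeasure x) (empMeasure ((fun r => ξ (code r)) ∘ c))
        (empMeasure (repTuple (tup (msel c q)) (φ ℓ)))
      have t2 : dKR (empMeasure ((fun r => ξ (code r)) ∘ c))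
          (empMeasure (repTuple (tup (msel c q)) (φ ℓ))) ≤ η := by
        rw [← hmsel_Em c q]
        exact le_trans (dkr_rep (tup (msel c q)) (φ ℓ)).2 hrepErr
      linarith [hc1]
    have hA1 : |f (φ ℓ) x z - v (φ ℓ) (msel c q)| ≤ L_f * (4 * η) := by
      have h := hLip (φ ℓ) x (repTuple (tup (msel c q)) (φ ℓ)) z (pt (msel c q))
      have h2 : L_f * (dKR (empMeasure x) (empMeasure (repTuple (tup (msel c q)) (φ ℓ)))
          + dist z (pt (msel c q))) ≤ L_f * (4 * η) := by
        apply mul_le_mul_of_nonneg_left _ hL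
        linarith [hd1, hdz]
      exact le_trans h h2
    -- step A3
    have hA3 : |V (msel c q) - F (empProb x) z| ≤ L_f * (3 * η) := by
      rw [← hFval (msel c q)]
      have h := hFlip (empProb (tup (msel c q))) (empProb x) (pt (msel c q)) z
      have hco1 : ((empProb (tup (msel c q)) : ProbabilityMeasure X) : Measure X)
          = empMeasure (tup (msel c q)) := rfl
      have hco2 : ((empProb x : ProbabilityMeasure X) : Measure X) = empMeasure x := rfl
      rw [hco1, hco2] at h
      have hd3 : dKR (empMeasure (tup (msel c q))) (empMeasure x) ≤ 2 * η := by
        rw [hmsel_Em c q]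
        exact hc2
      have hd4 : dist (pt (msel c q)) z ≤ η := by rw [dist_comm]; exact hdz
      have h2 : L_f * (dKR (empMeasure (tup (msel c q))) (empMeasure x)
          + dist (pt (msel c q)) z) ≤ L_f * (3 * η) := by
        apply mul_le_mul_of_nonneg_left _ hL
        linarith
      exact le_trans h h2
    -- combine
    have hchain : |f (φ ℓ) x z - F (empProb x) z| ≤ L_f * (4*η) + η + L_f * (3*η) := by
      calc |f (φ ℓ) x z - F (empProb x) z|
          ≤ |f (φ ℓ) x z - v (φ ℓ) (msel c q)| + |v (φ ℓ) (msel c q) - F (empProb x) z| :=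
            abs_sub_le _ _ _
      _ ≤ |f (φ ℓ) x z - v (φ ℓ) (msel c q)|
          + (|v (φ ℓ) (msel c q) - V (msel c q)| + |V (msel c q) - F (empProb x) z|) := by
            linarith [abs_sub_le (v (φ ℓ) (msel c q)) (V (msel c q)) (F (empProb x) z)]
      _ ≤ L_f * (4*η) + (η + L_f * (3*η)) := by linarith [hA1, hA2, hA3]
      _ = L_f * (4*η) + η + L_f * (3*η) := by ring
    have hfinal : L_f * (4*η) + η + L_f * (3*η) ≤ ε := by
      have hεeq : 8 * (L_f + 1) * η = ε := by
        rw [hη_def]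
        field_simp
      nlinarith [hηpos.le, hL]
    linarith
  have hFbd : ∀ (μ : ProbabilityMeasure X) (z : Z),
      |F μ z| ≤ (B_f + 1 + 2 * L_f * dXd X) + b z := by
    intro μ z
    obtain ⟨N₀, hN₀⟩ := hconvK {z} isCompact_singleton 1 one_pos
    obtain ⟨xs⟩ := ‹Nonempty X›
    have h1 := hN₀ N₀ le_rfl (fun _ => xs) z rfl
    have h2 := hBound (φ N₀) (fun _ => xs) z
    haveI : IsProbabilityMeasure ((empProb (fun _ : Fin (φ N₀ + 1) => xs)
        : ProbabilityMeasure X) : Measure X) := (empProb _).prop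
    haveI : IsProbabilityMeasure (μ : Measure X) := μ.prop
    have h3 := hFlip μ (empProb (fun _ : Fin (φ N₀ + 1) => xs)) z z
    rw [dist_self] at h3
    have h4 : dKR (μ : Measure X)
        ((empProb (fun _ : Fin (φ N₀ + 1) => xs) : ProbabilityMeasure X) : Measure X)
        ≤ 2 * dXd X := dkr_le_two_dXd _ _
    have h5 : L_f * (dKR (μ : Measure X)
        ((empProb (fun _ : Fin (φ N₀ + 1) => xs) : ProbabilityMeasure X) : Measure X) + 0)
        ≤ L_f * (2 * dXd X) := by
      apply mul_le_mul_of_nonneg_left _ hL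
      linarith
    have ha1 := abs_le.mp h1
    have ha2 := abs_le.mp h2
    have ha3 := abs_le.mp (le_trans h3 h5)
    have heq : L_f * (2 * dXd X) = 2 * L_f * dXd X := by ring
    rw [abs_le]
    constructor
    · linarith [ha1.1, ha1.2, ha2.1, ha2.2, ha3.1, ha3.2]
    · linarith [ha1.1, ha1.2, ha2.1, ha2.2, ha3.1, ha3.2]
  have hFcont : Continuous (fun p : ProbabilityMeasure X × Z => F p.1 p.2) := by
    rw [continuous_iff_continuousAt]
    rintro ⟨μ₀, z₀⟩
    have hgz : Tendsto (fun p : ProbabilityMeasure X × Z =>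
        L_f * (dKR (p.1 : Measure X) (μ₀ : Measure X) + dist p.2 z₀))
        (nhds (μ₀, z₀)) (nhds 0) := by
      have h1 : Tendsto (fun p : ProbabilityMeasure X × Z =>
          dKR (p.1 : Measure X) (μ₀ : Measure X)) (nhds (μ₀, z₀)) (nhds 0) :=
        (tendsto_dkr μ₀).comp (continuous_fst.tendsto (μ₀, z₀))
      have h2 : Tendsto (fun p : ProbabilityMeasure X × Z => dist p.2 z₀)
          (nhds (μ₀, z₀)) (nhds 0) := by
        have := (continuous_snd.dist (continuous_const (y := z₀))).tendsto
          ((μ₀, z₀) : ProbabilityMeasure X × Z)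
        simpa using this
      have := (h1.add h2).const_mul L_f
      simpa using this
    rw [ContinuousAt, tendsto_iff_dist_tendsto_zero]
    apply squeeze_zero (fun p => dist_nonneg) _ hgz
    intro p
    rw [Real.dist_eq]
    exact hFlip p.1 μ₀ p.2 z₀
  exact ⟨φ, hφmono, F, hFcont, hFlip,
    ⟨B_f + 1 + 2 * L_f * dXd X,
      by nlinarith [dXd_nonneg (X := X), hBf, hL, mul_nonneg hL (dXd_nonneg (X := X))], hFbd⟩, hconvK⟩
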